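/- Let N be a positive integer, let A be a symmetric real N×N matrix, and let Δt > 0 be such that the matrix I + Δt·A is positive definite. Let u ∈ ℝ^N with ‖u‖ = 1, let ũ = (I + Δt·A)⁻¹ u, and let w = ũ/‖ũ‖ (note ũ ≠ 0 since I + Δt·A is invertible). Then ⟨w, A w⟩ ≤ ⟨u, A u⟩; that is, one step of the semi-implicit backward-Euler normalized gradient flow for the quadratic energy E(v) = ⟨v, A v⟩ does not increase the energy, for any time step Δt > 0. -/

import Mathlib

open Matrix

lemma psd_cauchy_schwarz {N : ℕ} {B : Matrix (Fin N) (Fin N) ℝ} (hB : B.PosSemidef)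
    (x y : Fin N → ℝ) :
    (x ⬝ᵥ (B *ᵥ y)) ^ 2 ≤ (x ⬝ᵥ (B *ᵥ x)) * (y ⬝ᵥ (B *ᵥ y)) := by
  have hsym : ∀ a b : Fin N → ℝ, a ⬝ᵥ (B *ᵥ b) = b ⬝ᵥ (B *ᵥ a) := by
    intro a b
    have hBs : Bᵀ = B := by
      have := hB.1
      simpa [Matrix.IsHermitian] using this
    rw [Matrix.dotProduct_mulVec, ← Matrix.mulVec_transpose, hBs, dotProduct_comm]
  have key : ∀ t : ℝ, 0 ≤ (y ⬝ᵥ (B *ᵥ y)) * (t * t) + (2 * (x ⬝ᵥ (B *ᵥ y))) * t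
      + (x ⬝ᵥ (B *ᵥ x)) := by
    intro t
    have h := hB.dotProduct_mulVec_nonneg (x + t • y)
    simp only [Pi.star_apply, star_trivial] at h
    have hexp : (x + t • y) ⬝ᵥ (B *ᵥ (x + t • y))
        = (y ⬝ᵥ (B *ᵥ y)) * (t * t) + (2 * (x ⬝ᵥ (B *ᵥ y))) * t + (x ⬝ᵥ (B *ᵥ x)) := by
      rw [Matrix.mulVec_add, Matrix.mulVec_smul]
      rw [add_dotProduct, smul_dotProduct]
      simp only [dotProduct_add, dotProduct_smul, smul_eq_mul]
      rw [hsym y x]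
      ring
    linarith [hexp ▸ h]
  have hd := discrim_le_zero key
  rw [discrim] at hd
  nlinarith [hd]

/-- One step of the semi-implicit backward-Euler normalized gradient flow for the
quadratic energy `E(v) = ⟨v, A v⟩` does not increase the energy, for any `Δt > 0`. -/
theorem befd_energy_diminishing_linear
    (N : ℕ) (hN : 0 < N)
    (A : Matrix (Fin N) (Fin N) ℝ) (hA : A.IsSymm)
    (Δt : ℝ) (hΔt : 0 < Δt)
    (hpd : (1 + Δt • A).PosDef)
    (u : Fin N → ℝ) (hu : u ⬝ᵥ u = 1)
    (utilde : Fin N → ℝ) (hutilde : utilde = (1 + Δt • A)⁻¹ *ᵥ u)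
    (w : Fin N → ℝ) (hw : w = (Real.sqrt (utilde ⬝ᵥ utilde))⁻¹ • utilde) :
    w ⬝ᵥ (A *ᵥ w) ≤ u ⬝ᵥ (A *ᵥ u) := by
  set B := 1 + Δt • A with hB
  have hBpsd : B.PosSemidef := hpd.posSemidef
  -- invertibility
  have hdet : IsUnit B.det := (Matrix.isUnit_iff_isUnit_det B).mp hpd.isUnit
  have hBu : B *ᵥ utilde = u := by
    rw [hutilde, Matrix.mulVec_mulVec, Matrix.mul_nonsing_inv B hdet, Matrix.one_mulVec]
  -- utilde ≠ 0
  have hune : u ≠ 0 := by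
    intro h
    rw [h] at hu
    simp at hu
  have hutne : utilde ≠ 0 := by
    intro h
    rw [h, Matrix.mulVec_zero] at hBu
    exact hune hBu.symm
  -- moments
  set v := utilde
  set m0 := v ⬝ᵥ v with hm0
  set m1 := v ⬝ᵥ (B *ᵥ v) with hm1
  set m2 := (B *ᵥ v) ⬝ᵥ (B *ᵥ v) with hm2
  set m3 := (B *ᵥ v) ⬝ᵥ (B *ᵥ (B *ᵥ v)) with hm3
  have hm2one : m2 = 1 := by rw [hm2, hBu]; exact hu
  have hm0pos : 0 < m0 := by
    have hnn : 0 ≤ v ⬝ᵥ v := Finset.sum_nonneg fun i _ => mul_self_nonneg (v i)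
    refine lt_of_le_of_ne hnn fun h => hutne ?_
    exact (dotProduct_self_eq_zero).mp h.symm
  have hm1nonneg : 0 ≤ m1 := by
    have h := hBpsd.dotProduct_mulVec_nonneg v
    simpa [Pi.star_def] using h
  have hm3nonneg : 0 ≤ m3 := by
    have h := hBpsd.dotProduct_mulVec_nonneg (B *ᵥ v)
    simpa [Pi.star_def, Matrix.mulVec_mulVec, hm3] using h
  -- Cauchy-Schwarz inequalities
  have hcs1 : m1 ^ 2 ≤ m0 * m2 := by
    have hone : (1 : Matrix (Fin N) (Fin N) ℝ).PosSemidef := Matrix.PosSemidef.one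
    have h := psd_cauchy_schwarz hone v (B *ᵥ v)
    simpa [Matrix.one_mulVec, hm1, hm0, hm2] using h
  have hcs2 : m2 ^ 2 ≤ m1 * m3 := by
    have hsymB : ∀ a b : Fin N → ℝ, a ⬝ᵥ (B *ᵥ b) = b ⬝ᵥ (B *ᵥ a) := by
      intro a b
      have hBs : Bᵀ = B := by
        have := hBpsd.1
        simpa [Matrix.IsHermitian] using this
      rw [Matrix.dotProduct_mulVec, ← Matrix.mulVec_transpose, hBs, dotProduct_comm]
    have h := psd_cauchy_schwarz hBpsd v (B *ᵥ v)
    have hmid : v ⬝ᵥ (B *ᵥ (B *ᵥ v)) = m2 := by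
      rw [hsymB v (B *ᵥ v), hm2]
    rw [hmid, ← hm1, ← hm3] at h
    exact h
  -- key inequality m1 ≤ m0 * m3
  have hkey : m1 ≤ m0 * m3 := by
    have h1 : 1 ≤ m1 * m3 := by
      calc (1:ℝ) = m2 ^ 2 := by rw [hm2one]; ring
      _ ≤ m1 * m3 := hcs2
    calc m1 = m1 * 1 := by ring
    _ ≤ m1 * (m1 * m3) := by nlinarith
    _ = m1 ^ 2 * m3 := by ring
    _ ≤ (m0 * m2) * m3 := by nlinarith
    _ = m0 * m3 := by rw [hm2one]; ring
  -- translate goal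
  have hΔtA : ∀ x : Fin N → ℝ, Δt * (x ⬝ᵥ (A *ᵥ x)) = x ⬝ᵥ (B *ᵥ x) - x ⬝ᵥ x := by
    intro x
    have : B *ᵥ x = x + Δt • (A *ᵥ x) := by
      rw [hB, Matrix.add_mulVec, Matrix.one_mulVec, Matrix.smul_mulVec]
    rw [this]
    simp [dotProduct_add, dotProduct_smul, smul_eq_mul]
  -- w energy
  have hs : Real.sqrt (v ⬝ᵥ v) ^ 2 = m0 := Real.sq_sqrt hm0pos.le
  have hspos : 0 < Real.sqrt (v ⬝ᵥ v) := Real.sqrt_pos.mpr hm0pos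
  have hwA : w ⬝ᵥ (A *ᵥ w) = (v ⬝ᵥ (A *ᵥ v)) / m0 := by
    rw [hw]
    rw [Matrix.mulVec_smul, smul_dotProduct, dotProduct_smul]
    rw [smul_eq_mul, smul_eq_mul, ← hs]
    field_simp
    rw [Real.sqrt_sq hspos.le]
  rw [hwA]
  rw [div_le_iff₀ hm0pos]
  -- multiply by Δt
  rw [← mul_le_mul_iff_right₀ hΔt]
  have huA : Δt * (u ⬝ᵥ (A *ᵥ u)) = m3 - 1 := by
    rw [hΔtA u, hu, ← hBu, ← hm3]
  have hvA : Δt * (v ⬝ᵥ (A *ᵥ v)) = m1 - m0 := by rw [hΔtA v, ← hm1, ← hm0]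
  calc Δt * (v ⬝ᵥ (A *ᵥ v)) = m1 - m0 := hvA
  _ ≤ m0 * m3 - m0 := by linarith
  _ = m0 * (m3 - 1) := by ring
  _ = m0 * (Δt * (u ⬝ᵥ (A *ᵥ u))) := by rw [huA]
  _ = Δt * (u ⬝ᵥ (A *ᵥ u) * m0) := by ring
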